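/- Let A be an n×n Manin matrix over an associative unital (possibly noncommutative) ring R, and let C be an n×n matrix all of whose entries lie in the center of R. Then both CA and AC are Manin matrices, and det^col(CA) = det^col(AC) = det(C)·det^col(A), where det(C) denotes the ordinary determinant of the matrix C with central (hence mutually commuting) entries. -/

import Mathlib

open scoped BigOperators

/-- A matrix `M` over a (possibly noncommutative) ring is a *Manin matrix* if
entries of the same column commute and cross-commutators of 2×2 submatrices are equal. -/
def Matrix.IsManin {R : Type*} [Ring R] {n m : ℕ} (M : Matrix (Fin n) (Fin m) R) : Prop :=
  (∀ i k : Fin n, ∀ j : Fin m, M i j * M k j = M k j * M i j) ∧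
  (∀ i k : Fin n, ∀ j l : Fin m,
    M i j * M k l - M k l * M i j = M k j * M i l - M i l * M k j)

/-- Column determinant: factors multiplied in order of increasing column index. -/
noncomputable def Matrix.detCol {R : Type*} [Ring R] {n : ℕ}
    (M : Matrix (Fin n) (Fin n) R) : R :=
  ∑ σ : Equiv.Perm (Fin n),
    (Equiv.Perm.sign σ : ℤ) • ((List.finRange n).map (fun i => M (σ i) i)).prod

/-- Row determinant: factors multiplied in order of increasing row index. -/
noncomputable def Matrix.detRow {R : Type*} [Ring R] {n : ℕ}
    (M : Matrix (Fin n) (Fin n) R) : R :=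
  ∑ σ : Equiv.Perm (Fin n),
    (Equiv.Perm.sign σ : ℤ) • ((List.finRange n).map (fun i => M i (σ i))).prod

/-- Row permanent: factors multiplied in order of increasing row index. -/
noncomputable def Matrix.permRow {R : Type*} [Ring R] {n : ℕ}
    (M : Matrix (Fin n) (Fin n) R) : R :=
  ∑ σ : Equiv.Perm (Fin n), ((List.finRange n).map (fun i => M i (σ i))).prod

section Aux
variable {R : Type*} [Ring R] {ι κ : Type*}

lemma central_list_prod_mem (l : List ι) (c : ι → R) (hc : ∀ i, c i ∈ Set.center R) :
    (l.map c).prod ∈ Set.center R := by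
  induction l with
  | nil => simpa using Set.one_mem_center
  | cons x l ih => simpa using Set.mul_mem_center (hc x) ih

/-- pull central left factors out of an ordered product -/
lemma central_list_prod (l : List ι) (c a : ι → R) (hc : ∀ i, c i ∈ Set.center R) :
    (l.map fun i => c i * a i).prod = (l.map c).prod * (l.map a).prod := by
  induction l with
  | nil => simp
  | cons x l ih =>
    simp only [List.map_cons, List.prod_cons, ih]
    rw [mul_assoc, ← mul_assoc (a x), ← (central_list_prod_mem l c hc).comm (a x),
      mul_assoc, ← mul_assoc]

/-- expand an ordered product of sums -/
lemma list_prod_sum_expand [Fintype κ] :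
    ∀ (n : ℕ) (g : Fin n → κ → R),
      ((List.finRange n).map fun i => ∑ p : κ, g i p).prod
        = ∑ f : Fin n → κ, ((List.finRange n).map fun i => g i (f i)).prod := by
  intro n
  induction n with
  | zero => intro g; simp
  | succ m ih =>
    intro g
    rw [List.finRange_succ]
    simp only [List.map_cons, List.prod_cons, List.map_map, Function.comp_def]
    rw [ih (fun i p => g i.succ p)]
    rw [Finset.sum_mul_sum]
    have h1 : ∑ f : Fin (m+1) → κ,
        g 0 (f 0) * ((List.finRange m).map fun i => g i.succ (f i.succ)).prod
        = ∑ x : κ × (Fin m → κ),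
          g 0 x.1 * ((List.finRange m).map fun i => g i.succ (x.2 i)).prod :=
      Fintype.sum_equiv (Fin.consEquiv (fun _ : Fin (m+1) => κ)).symm _ _
        (fun f => by simp [Fin.consEquiv, Fin.tail])
    rw [h1, Fintype.sum_prod_type]
variable {R : Type*} [Ring R]

lemma mem_take_finRange {n k : ℕ} {x : Fin n} (hx : x ∈ (List.finRange n).take k) :
    x.val < k := by
  rcases List.mem_iff_getElem.1 hx with ⟨j, hj, rfl⟩
  have hj' : j < k := lt_of_lt_of_le hj (by simp [List.length_take])
  rw [List.getElem_take, List.getElem_finRange]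
  simpa using hj'

lemma mem_drop_finRange {n k : ℕ} {x : Fin n} (hx : x ∈ (List.finRange n).drop k) :
    k ≤ x.val := by
  rcases List.mem_iff_getElem.1 hx with ⟨j, hj, rfl⟩
  rw [List.getElem_drop, List.getElem_finRange]
  simp

lemma finRange_prod_split (n : ℕ) (h : Fin n → R) (k : ℕ) (hk : k + 1 < n) :
    ((List.finRange n).map h).prod
      = (((List.finRange n).take k).map h).prod * h ⟨k, Nat.lt_of_succ_lt hk⟩
        * h ⟨k+1, hk⟩ * (((List.finRange n).drop (k+2)).map h).prod := by
  have hlen : (List.finRange n).length = n := List.length_finRange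
  have h1 : k < (List.finRange n).length := by omega
  have h2 : k + 1 < (List.finRange n).length := by omega
  conv_lhs => rw [← List.take_append_drop k (List.finRange n)]
  rw [List.drop_eq_getElem_cons h1, List.drop_eq_getElem_cons h2]
  rw [List.getElem_finRange, List.getElem_finRange]
  simp only [List.map_append, List.map_cons, List.prod_append, List.prod_cons]
  simp [Fin.cast, mul_assoc]

section swaplemma
variable {n : ℕ}

lemma submatrix_isManin {m m' : ℕ} (A : Matrix (Fin n) (Fin m) R) (hA : A.IsManin)
    (g : Fin m' → Fin m) : (A.submatrix id g).IsManin := by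
  refine ⟨fun i k j => hA.1 i k (g j), fun i k j l => hA.2 i k (g j) (g l)⟩

lemma detCol_swap_adjacent (A : Matrix (Fin n) (Fin n) R) (hA : A.IsManin)
    (a b : Fin n) (hab : (a : ℕ) + 1 = (b : ℕ)) :
    (A.submatrix id (Equiv.swap a b)).detCol = - A.detCol := by
  have hne : a ≠ b := fun h => by rw [h] at hab; omega
  have hk : (a : ℕ) + 1 < n := by rw [hab]; exact b.isLt
  set s := Equiv.swap a b with hs
  have hsa : s a = b := Equiv.swap_apply_left a b
  have hsb : s b = a := Equiv.swap_apply_right a b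
  have hsx : ∀ x : Fin n, x ≠ a → x ≠ b → s x = x := fun x h1 h2 =>
    Equiv.swap_apply_of_ne_of_ne h1 h2
  have hb' : (⟨(a : ℕ) + 1, hk⟩ : Fin n) = b := Fin.ext hab
  set X : Equiv.Perm (Fin n) → R :=
    fun σ => (((List.finRange n).take (a : ℕ)).map fun x => A (σ x) x).prod with hX
  set Z : Equiv.Perm (Fin n) → R :=
    fun σ => (((List.finRange n).drop ((a : ℕ)+2)).map fun x => A (σ x) x).prod with hZ
  have hne_take : ∀ x : Fin n, x ∈ (List.finRange n).take (a : ℕ) → x ≠ a ∧ x ≠ b := by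
    intro x hx
    have := mem_take_finRange hx
    constructor <;> intro h <;> subst h <;> omega
  have hne_drop : ∀ x : Fin n, x ∈ (List.finRange n).drop ((a : ℕ)+2) → x ≠ a ∧ x ≠ b := by
    intro x hx
    have := mem_drop_finRange hx
    constructor <;> intro h <;> subst h <;> omega
  have hXs : ∀ σ : Equiv.Perm (Fin n), X (σ * s) = X σ := by
    intro σ
    refine congrArg List.prod (List.map_congr_left fun x hx => ?_)
    rcases hne_take x hx with ⟨h1, h2⟩
    simp [Equiv.Perm.mul_apply, hsx x h1 h2]
  have hZs : ∀ σ : Equiv.Perm (Fin n), Z (σ * s) = Z σ := by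
    intro σ
    refine congrArg List.prod (List.map_congr_left fun x hx => ?_)
    rcases hne_drop x hx with ⟨h1, h2⟩
    simp [Equiv.Perm.mul_apply, hsx x h1 h2]
  have splitA : ∀ σ : Equiv.Perm (Fin n),
      ((List.finRange n).map fun i => A (σ i) i).prod
        = X σ * A (σ a) a * A (σ b) b * Z σ := by
    intro σ
    rw [finRange_prod_split n (fun i => A (σ i) i) (a : ℕ) hk, Fin.eta, hb']
  have splitB : ∀ σ : Equiv.Perm (Fin n),
      ((List.finRange n).map fun i => A (σ (s i)) (s i)).prod
        = X σ * A (σ b) b * A (σ a) a * Z σ := by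
    intro σ
    rw [finRange_prod_split n (fun i => A (σ (s i)) (s i)) (a : ℕ) hk, Fin.eta, hb',
      hsa, hsb]
    have hP : (((List.finRange n).take (a : ℕ)).map fun x => A (σ (s x)) (s x)).prod = X σ := by
      refine congrArg List.prod (List.map_congr_left fun x hx => ?_)
      rcases hne_take x hx with ⟨h1, h2⟩
      rw [hsx x h1 h2]
    have hQ : (((List.finRange n).drop ((a : ℕ)+2)).map fun x => A (σ (s x)) (s x)).prod = Z σ := by
      refine congrArg List.prod (List.map_congr_left fun x hx => ?_)
      rcases hne_drop x hx with ⟨h1, h2⟩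
      rw [hsx x h1 h2]
    rw [hP, hQ]
  have hdetA : A.detCol
      = ∑ σ : Equiv.Perm (Fin n),
          (Equiv.Perm.sign σ : ℤ) • (X σ * A (σ a) a * A (σ b) b * Z σ) := by
    rw [Matrix.detCol]
    exact Finset.sum_congr rfl fun σ _ => by rw [splitA σ]
  have hsigns : ∀ σ : Equiv.Perm (Fin n),
      ((Equiv.Perm.sign (σ * s) : ℤ)) = -(Equiv.Perm.sign σ : ℤ) := by
    intro σ
    rw [Equiv.Perm.sign_mul, hs, Equiv.Perm.sign_swap hne]
    push_cast
    ring
  have hdetB : (A.submatrix id s).detCol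
      = ∑ σ : Equiv.Perm (Fin n),
          -((Equiv.Perm.sign σ : ℤ) • (X σ * A (σ b) b * A (σ a) a * Z σ)) := by
    unfold Matrix.detCol
    rw [← Equiv.sum_comp (Equiv.mulRight s)
      (fun σ : Equiv.Perm (Fin n) => (Equiv.Perm.sign σ : ℤ) •
        ((List.finRange n).map fun i => (A.submatrix id s) (σ i) i).prod)]
    refine Finset.sum_congr rfl fun σ _ => ?_
    have : ((List.finRange n).map fun i => (A.submatrix id s) ((Equiv.mulRight s σ) i) i).prod
        = ((List.finRange n).map fun i => A (σ (s i)) (s i)).prod := by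
      refine congrArg List.prod (List.map_congr_left fun x _ => ?_)
      simp [Matrix.submatrix_apply, Equiv.Perm.mul_apply]
    have hmr : (Equiv.mulRight s) σ = σ * s := rfl
    rw [hmr] at this ⊢
    rw [this, splitB, hsigns, neg_smul]
  have key : (A.submatrix id s).detCol + A.detCol = 0 := by
    rw [hdetA, hdetB, ← Finset.sum_add_distrib]
    have hterm : ∀ σ : Equiv.Perm (Fin n),
        -((Equiv.Perm.sign σ : ℤ) • (X σ * A (σ b) b * A (σ a) a * Z σ))
          + (Equiv.Perm.sign σ : ℤ) • (X σ * A (σ a) a * A (σ b) b * Z σ)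
        = (Equiv.Perm.sign σ : ℤ) •
            (X σ * (A (σ a) a * A (σ b) b - A (σ b) b * A (σ a) a) * Z σ) := by
      intro σ
      have hexp : X σ * (A (σ a) a * A (σ b) b - A (σ b) b * A (σ a) a) * Z σ
          = X σ * A (σ a) a * A (σ b) b * Z σ - X σ * A (σ b) b * A (σ a) a * Z σ := by
        noncomm_ring
      rw [hexp, smul_sub]
      abel
    rw [Finset.sum_congr rfl fun σ _ => hterm σ]
    refine Finset.sum_ninvolution (fun σ => σ * s) ?_ ?_ (fun _ => Finset.mem_univ _)
      (fun σ => by show σ * s * s = σ; rw [mul_assoc, Equiv.swap_mul_self, mul_one])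
    · intro σ
      try dsimp only
      have hmid : A ((σ * s) a) a * A ((σ * s) b) b - A ((σ * s) b) b * A ((σ * s) a) a
          = A (σ a) a * A (σ b) b - A (σ b) b * A (σ a) a := by
        rw [Equiv.Perm.mul_apply, Equiv.Perm.mul_apply, hsa, hsb]
        exact hA.2 (σ b) (σ a) a b
      rw [hsigns σ, hXs σ, hZs σ, hmid, neg_smul]
      exact add_neg_cancel _
    · intro σ _ h
      try dsimp only at h
      have hs1 : s = 1 := mul_left_cancel (a := σ) (by rw [h, mul_one])
      have : s a = a := by rw [hs1]; rfl
      exact hne (by rw [← hsa, this])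
  exact eq_neg_of_add_eq_zero_left key

end swaplemma

section permlemma
variable {n : ℕ}

lemma detCol_submatrix_perm (τ : Equiv.Perm (Fin n)) :
    ∀ (B : Matrix (Fin n) (Fin n) R), B.IsManin →
      (B.submatrix id τ).detCol = (Equiv.Perm.sign τ : ℤ) • B.detCol := by
  cases n with
  | zero =>
    intro B _
    have hτ : τ = 1 := Subsingleton.elim _ _
    subst hτ
    have hsub : B.submatrix id ⇑(1 : Equiv.Perm (Fin 0)) = B := by
      ext i j; exact i.elim0
    rw [hsub]
    simp
  | succ m =>
    have hmem : τ ∈ Submonoid.closure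
        (Set.range fun i : Fin m => Equiv.swap i.castSucc i.succ) := by
      rw [Equiv.Perm.mclosure_swap_castSucc_succ]; trivial
    induction hmem using Submonoid.closure_induction with
    | mem x hx =>
      rcases hx with ⟨i, rfl⟩
      intro B hB
      have hne : i.castSucc ≠ i.succ := (Fin.castSucc_lt_succ (i := i)).ne
      rw [detCol_swap_adjacent B hB i.castSucc i.succ (by simp)]
      rw [Equiv.Perm.sign_swap hne]
      simp
    | one =>
      intro B hB
      have : B.submatrix id ⇑(1 : Equiv.Perm (Fin (m+1))) = B := by
        ext i j; simp [Matrix.submatrix_apply]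
      rw [this]
      simp
    | mul x y hx hy px py =>
      intro B hB
      have hcomp : B.submatrix id ⇑(x * y) = (B.submatrix id ⇑x).submatrix id ⇑y := by
        ext i j; simp [Matrix.submatrix_apply, Equiv.Perm.mul_apply]
      rw [hcomp, py (B.submatrix id ⇑x) (submatrix_isManin B hB ⇑x), px B hB,
        smul_smul, Equiv.Perm.sign_mul]
      push_cast
      rw [mul_comm]
end permlemma

section zerolemma
variable {n : ℕ}

lemma detCol_zero_adjacent (B : Matrix (Fin n) (Fin n) R) (hB : B.IsManin)
    (a b : Fin n) (hab : (a : ℕ) + 1 = (b : ℕ)) (hcols : ∀ i, B i a = B i b) :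
    B.detCol = 0 := by
  have hne : a ≠ b := fun h => by rw [h] at hab; omega
  have hk : (a : ℕ) + 1 < n := by rw [hab]; exact b.isLt
  set s := Equiv.swap a b with hs
  have hsa : s a = b := Equiv.swap_apply_left a b
  have hsb : s b = a := Equiv.swap_apply_right a b
  have hsx : ∀ x : Fin n, x ≠ a → x ≠ b → s x = x := fun x h1 h2 =>
    Equiv.swap_apply_of_ne_of_ne h1 h2
  have hb' : (⟨(a : ℕ) + 1, hk⟩ : Fin n) = b := Fin.ext hab
  set X : Equiv.Perm (Fin n) → R :=
    fun σ => (((List.finRange n).take (a : ℕ)).map fun x => B (σ x) x).prod with hX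
  set Z : Equiv.Perm (Fin n) → R :=
    fun σ => (((List.finRange n).drop ((a : ℕ)+2)).map fun x => B (σ x) x).prod with hZ
  have hne_take : ∀ x : Fin n, x ∈ (List.finRange n).take (a : ℕ) → x ≠ a ∧ x ≠ b := by
    intro x hx
    have := mem_take_finRange hx
    constructor <;> intro h <;> subst h <;> omega
  have hne_drop : ∀ x : Fin n, x ∈ (List.finRange n).drop ((a : ℕ)+2) → x ≠ a ∧ x ≠ b := by
    intro x hx
    have := mem_drop_finRange hx
    constructor <;> intro h <;> subst h <;> omega
  have hXs : ∀ σ : Equiv.Perm (Fin n), X (σ * s) = X σ := by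
    intro σ
    refine congrArg List.prod (List.map_congr_left fun x hx => ?_)
    rcases hne_take x hx with ⟨h1, h2⟩
    simp [Equiv.Perm.mul_apply, hsx x h1 h2]
  have hZs : ∀ σ : Equiv.Perm (Fin n), Z (σ * s) = Z σ := by
    intro σ
    refine congrArg List.prod (List.map_congr_left fun x hx => ?_)
    rcases hne_drop x hx with ⟨h1, h2⟩
    simp [Equiv.Perm.mul_apply, hsx x h1 h2]
  have splitA : ∀ σ : Equiv.Perm (Fin n),
      ((List.finRange n).map fun i => B (σ i) i).prod
        = X σ * B (σ a) a * B (σ b) b * Z σ := by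
    intro σ
    rw [finRange_prod_split n (fun i => B (σ i) i) (a : ℕ) hk, Fin.eta, hb']
  have hsigns : ∀ σ : Equiv.Perm (Fin n),
      ((Equiv.Perm.sign (σ * s) : ℤ)) = -(Equiv.Perm.sign σ : ℤ) := by
    intro σ
    rw [Equiv.Perm.sign_mul, hs, Equiv.Perm.sign_swap hne]
    push_cast
    ring
  have hdet : B.detCol = ∑ σ : Equiv.Perm (Fin n),
      (Equiv.Perm.sign σ : ℤ) • (X σ * B (σ a) a * B (σ b) b * Z σ) := by
    rw [Matrix.detCol]
    exact Finset.sum_congr rfl fun σ _ => by rw [splitA σ]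
  rw [hdet]
  refine Finset.sum_ninvolution (fun σ => σ * s) ?_ ?_ (fun _ => Finset.mem_univ _)
    (fun σ => by show σ * s * s = σ; rw [mul_assoc, Equiv.swap_mul_self, mul_one])
  · intro σ
    try dsimp only
    have h1 : B ((σ * s) a) a = B (σ b) b := by
      rw [Equiv.Perm.mul_apply, hsa, hcols]
    have h2 : B ((σ * s) b) b = B (σ a) a := by
      rw [Equiv.Perm.mul_apply, hsb, ← hcols]
    rw [hsigns σ, hXs σ, hZs σ, h1, h2, neg_smul]
    have hcomm : B (σ a) a * B (σ b) b = B (σ b) b * B (σ a) a := by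
      have hb2 : B (σ b) b = B (σ b) a := (hcols (σ b)).symm
      rw [hb2]
      exact hB.1 (σ a) (σ b) a
    rw [mul_assoc (X σ) (B (σ a) a), mul_assoc (X σ) (B (σ b) b), hcomm]
    exact add_neg_cancel _
  · intro σ _ h
    try dsimp only at h
    have hs1 : s = 1 := mul_left_cancel (a := σ) (by rw [h, mul_one])
    have : s a = a := by rw [hs1]; rfl
    exact hne (by rw [← hsa, this])

lemma detCol_zero_cols_eq (B : Matrix (Fin n) (Fin n) R) (hB : B.IsManin)
    (j l : Fin n) (hjl : j ≠ l) (hcols : ∀ i, B i j = B i l) : B.detCol = 0 := by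
  have h2 : 2 ≤ n := by
    by_contra h
    exact hjl (Fin.ext (by omega))
  set a : Fin n := ⟨0, by omega⟩ with ha
  set b : Fin n := ⟨1, by omega⟩ with hbdef
  set m : Fin n := Equiv.swap a j l with hm
  set τ : Equiv.Perm (Fin n) := Equiv.swap a j * Equiv.swap b m with hτ
  have hab : a ≠ b := by simp [ha, hbdef, Fin.ext_iff]
  have ham : a ≠ m := by
    intro h
    apply hjl
    have h1 : Equiv.swap a j m = l := by rw [hm]; exact Equiv.swap_apply_self _ _ l
    rw [← h, Equiv.swap_apply_left] at h1
    exact h1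
  have hswapm : Equiv.swap a j m = l := by rw [hm]; exact Equiv.swap_apply_self _ _ l
  have hτa : τ a = j := by
    have hba : Equiv.swap b m a = a := Equiv.swap_apply_of_ne_of_ne hab ham
    show Equiv.swap a j (Equiv.swap b m a) = j
    rw [hba, Equiv.swap_apply_left]
  have hτb : τ b = l := by
    show Equiv.swap a j (Equiv.swap b m b) = l
    rw [Equiv.swap_apply_left, hswapm]
  have hB' : (B.submatrix id ⇑τ).IsManin := submatrix_isManin B hB ⇑τ
  have hcols' : ∀ i, (B.submatrix id ⇑τ) i a = (B.submatrix id ⇑τ) i b := by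
    intro i
    simp [Matrix.submatrix_apply, hτa, hτb, hcols i]
  have hz : (B.submatrix id ⇑τ).detCol = 0 :=
    detCol_zero_adjacent _ hB' a b (by simp [ha, hbdef]) hcols'
  have hp := detCol_submatrix_perm τ B hB
  rw [hz] at hp
  rcases Int.units_eq_one_or (Equiv.Perm.sign τ) with h | h <;> rw [h] at hp
  · simpa using hp.symm
  · have : -B.detCol = 0 := by simpa using hp.symm
    rwa [neg_eq_zero] at this
end zerolemma

section mainparts
variable {n : ℕ}

lemma central_mul_mul (c d x y : R) (hc : c ∈ Set.center R) (hd : d ∈ Set.center R) :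
    (c * x) * (d * y) = (c * d) * (x * y) := by
  rw [mul_assoc c x, ← mul_assoc x d y, ← hd.comm x, mul_assoc d x y, ← mul_assoc c d]

lemma mul_central_mul (c d x y : R) (hc : c ∈ Set.center R) (hd : d ∈ Set.center R) :
    (x * c) * (y * d) = (c * d) * (x * y) := by
  rw [← hc.comm x, ← hd.comm y, central_mul_mul c d x y hc hd]

lemma mul_sub_sum {ι : Type*} [Fintype ι] (x y : ι → R) :
    (∑ p, x p) * (∑ q, y q) - (∑ q, y q) * (∑ p, x p)
      = ∑ p, ∑ q, (x p * y q - y q * x p) := by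
  rw [Finset.sum_mul_sum, Finset.sum_mul_sum, Finset.sum_comm (s := Finset.univ)
    (t := Finset.univ) (f := fun q p => y q * x p)]
  rw [← Finset.sum_sub_distrib]
  exact Finset.sum_congr rfl fun p _ => (Finset.sum_sub_distrib _ _).symm

lemma central_isManin (M : Matrix (Fin n) (Fin n) R)
    (hM : ∀ i j, M i j ∈ Set.center R) : M.IsManin := by
  constructor
  · intro i k j
    exact (hM i j).comm (M k j)
  · intro i k j l
    rw [(hM i j).comm (M k l), (hM k j).comm (M i l)]
    simp

lemma not_injective_exists {f : Fin n → Fin n} (hf : ¬ Function.Injective f) :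
    ∃ j l, j ≠ l ∧ f j = f l := by
  unfold Function.Injective at hf
  push_neg at hf
  rcases hf with ⟨j, l, h1, h2⟩
  exact ⟨j, l, h2, h1⟩

lemma sum_over_funcs (F : (Fin n → Fin n) → R)
    (h0 : ∀ f : Fin n → Fin n, ¬ Function.Injective f → F f = 0) :
    ∑ f : Fin n → Fin n, F f = ∑ τ : Equiv.Perm (Fin n), F ⇑τ := by
  classical
  rw [← Finset.sum_filter_add_sum_filter_not Finset.univ
    (fun f : Fin n → Fin n => Function.Injective f) F]
  have h2 : ∑ f ∈ Finset.univ.filter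
      (fun f : Fin n → Fin n => ¬ Function.Injective f), F f = 0 := by
    refine Finset.sum_eq_zero fun f hf => h0 f ?_
    simpa using (Finset.mem_filter.1 hf).2
  rw [h2, add_zero]
  refine (Finset.sum_bij (fun (τ : Equiv.Perm (Fin n)) _ => ⇑τ) ?_ ?_ ?_ ?_).symm
  · intro τ _
    simpa using τ.injective
  · intro τ₁ _ τ₂ _ h
    exact Equiv.coe_fn_injective h
  · intro f hf
    have hinj : Function.Injective f := by simpa using (Finset.mem_filter.1 hf).2
    have hbij : Function.Bijective f := Finite.injective_iff_bijective.1 hinj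
    exact ⟨Equiv.ofBijective f hbij, Finset.mem_univ _, rfl⟩
  · intro τ _
    rfl

end mainparts

section dets
variable {n : ℕ}

lemma detCol_central_mul_left (A C : Matrix (Fin n) (Fin n) R) (hA : A.IsManin)
    (hC : ∀ i j : Fin n, C i j ∈ Set.center R) :
    (C * A).detCol = C.detCol * A.detCol := by
  have hstep : ∀ σ : Equiv.Perm (Fin n),
      ((List.finRange n).map fun i => (C * A) (σ i) i).prod
        = ∑ f : Fin n → Fin n,
            (((List.finRange n).map fun i => C (σ i) (f i)).prod *
             ((List.finRange n).map fun i => A (f i) i).prod) := by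
    intro σ
    have h1 : ((List.finRange n).map fun i => (C * A) (σ i) i)
        = (List.finRange n).map fun i => ∑ p, C (σ i) p * A p i :=
      List.map_congr_left fun x _ => by rw [Matrix.mul_apply]
    rw [h1, list_prod_sum_expand n (fun i p => C (σ i) p * A p i)]
    exact Finset.sum_congr rfl fun f _ =>
      central_list_prod _ _ _ (fun i => hC (σ i) (f i))
  rw [Matrix.detCol]
  calc ∑ σ : Equiv.Perm (Fin n),
        (Equiv.Perm.sign σ : ℤ) • ((List.finRange n).map fun i => (C * A) (σ i) i).prod
      = ∑ σ : Equiv.Perm (Fin n), ∑ f : Fin n → Fin n,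
          (Equiv.Perm.sign σ : ℤ) •
            (((List.finRange n).map fun i => C (σ i) (f i)).prod *
             ((List.finRange n).map fun i => A (f i) i).prod) := by
        exact Finset.sum_congr rfl fun σ _ => by rw [hstep σ, Finset.smul_sum]
    _ = ∑ f : Fin n → Fin n, ∑ σ : Equiv.Perm (Fin n),
          (Equiv.Perm.sign σ : ℤ) •
            (((List.finRange n).map fun i => C (σ i) (f i)).prod *
             ((List.finRange n).map fun i => A (f i) i).prod) := Finset.sum_comm
    _ = ∑ f : Fin n → Fin n,
          (C.submatrix id f).detCol * ((List.finRange n).map fun i => A (f i) i).prod := by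
        refine Finset.sum_congr rfl fun f _ => ?_
        rw [Matrix.detCol, Finset.sum_mul]
        exact Finset.sum_congr rfl fun σ _ => by
          rw [smul_mul_assoc]; rfl
    _ = ∑ τ : Equiv.Perm (Fin n),
          (C.submatrix id ⇑τ).detCol * ((List.finRange n).map fun i => A (τ i) i).prod := by
        refine sum_over_funcs _ fun f hf => ?_
        rcases not_injective_exists hf with ⟨j, l, hjl, hfe⟩
        have hz : (C.submatrix id f).detCol = 0 := by
          refine detCol_zero_cols_eq _ (central_isManin _ fun i j => hC i (f j)) j l hjl ?_
          intro i
          simp [Matrix.submatrix_apply, hfe]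
        rw [hz, zero_mul]
    _ = C.detCol * A.detCol := by
        have hterm : ∀ τ : Equiv.Perm (Fin n),
            (C.submatrix id ⇑τ).detCol * ((List.finRange n).map fun i => A (τ i) i).prod
              = C.detCol * ((Equiv.Perm.sign τ : ℤ) •
                  ((List.finRange n).map fun i => A (τ i) i).prod) := fun τ => by
          rw [detCol_submatrix_perm τ C (central_isManin _ hC), smul_mul_assoc,
            ← mul_smul_comm]
        rw [Finset.sum_congr rfl fun τ _ => hterm τ, ← Finset.mul_sum]
        rfl

lemma detCol_central_mul_right (A C : Matrix (Fin n) (Fin n) R) (hA : A.IsManin)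
    (hC : ∀ i j : Fin n, C i j ∈ Set.center R) :
    (A * C).detCol = C.detCol * A.detCol := by
  have hstep : ∀ σ : Equiv.Perm (Fin n),
      ((List.finRange n).map fun i => (A * C) (σ i) i).prod
        = ∑ f : Fin n → Fin n,
            (((List.finRange n).map fun i => C (f i) i).prod *
             ((List.finRange n).map fun i => A (σ i) (f i)).prod) := by
    intro σ
    have h1 : ((List.finRange n).map fun i => (A * C) (σ i) i)
        = (List.finRange n).map fun i => ∑ p, A (σ i) p * C p i :=
      List.map_congr_left fun x _ => by rw [Matrix.mul_apply]
    rw [h1, list_prod_sum_expand n (fun i p => A (σ i) p * C p i)]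
    refine Finset.sum_congr rfl fun f _ => ?_
    have h2 : ((List.finRange n).map fun i => A (σ i) (f i) * C (f i) i)
        = (List.finRange n).map fun i => C (f i) i * A (σ i) (f i) :=
      List.map_congr_left fun x _ => ((hC (f x) x).comm _).symm
    rw [h2]
    exact central_list_prod _ _ _ (fun i => hC (f i) i)
  rw [Matrix.detCol]
  calc ∑ σ : Equiv.Perm (Fin n),
        (Equiv.Perm.sign σ : ℤ) • ((List.finRange n).map fun i => (A * C) (σ i) i).prod
      = ∑ σ : Equiv.Perm (Fin n), ∑ f : Fin n → Fin n,
          (Equiv.Perm.sign σ : ℤ) •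
            (((List.finRange n).map fun i => C (f i) i).prod *
             ((List.finRange n).map fun i => A (σ i) (f i)).prod) := by
        exact Finset.sum_congr rfl fun σ _ => by rw [hstep σ, Finset.smul_sum]
    _ = ∑ f : Fin n → Fin n, ∑ σ : Equiv.Perm (Fin n),
          (Equiv.Perm.sign σ : ℤ) •
            (((List.finRange n).map fun i => C (f i) i).prod *
             ((List.finRange n).map fun i => A (σ i) (f i)).prod) := Finset.sum_comm
    _ = ∑ f : Fin n → Fin n,
          ((List.finRange n).map fun i => C (f i) i).prod * (A.submatrix id f).detCol := by
        refine Finset.sum_congr rfl fun f _ => ?_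
        rw [Matrix.detCol, Finset.mul_sum]
        exact Finset.sum_congr rfl fun σ _ => by
          rw [mul_smul_comm]; rfl
    _ = ∑ τ : Equiv.Perm (Fin n),
          ((List.finRange n).map fun i => C (τ i) i).prod * (A.submatrix id ⇑τ).detCol := by
        refine sum_over_funcs _ fun f hf => ?_
        rcases not_injective_exists hf with ⟨j, l, hjl, hfe⟩
        have hz : (A.submatrix id f).detCol = 0 := by
          refine detCol_zero_cols_eq _ (submatrix_isManin A hA f) j l hjl ?_
          intro i
          simp [Matrix.submatrix_apply, hfe]
        rw [hz, mul_zero]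
    _ = C.detCol * A.detCol := by
        have hterm : ∀ τ : Equiv.Perm (Fin n),
            ((List.finRange n).map fun i => C (τ i) i).prod * (A.submatrix id ⇑τ).detCol
              = ((Equiv.Perm.sign τ : ℤ) •
                  ((List.finRange n).map fun i => C (τ i) i).prod) * A.detCol := fun τ => by
          rw [detCol_submatrix_perm τ A hA, mul_smul_comm, ← smul_mul_assoc]
        rw [Finset.sum_congr rfl fun τ _ => hterm τ, ← Finset.sum_mul]
        rfl

end dets

section maninparts
variable {n : ℕ}

lemma comm_term (c d x y : R) (hc : c ∈ Set.center R) (hd : d ∈ Set.center R) :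
    (c * x) * (d * y) - (d * y) * (c * x) = (c * d) * (x * y - y * x) := by
  rw [central_mul_mul c d x y hc hd, central_mul_mul d c y x hd hc, hd.comm c, ← mul_sub]

lemma comm_term' (c d x y : R) (hc : c ∈ Set.center R) (hd : d ∈ Set.center R) :
    (x * c) * (y * d) - (y * d) * (x * c) = (c * d) * (x * y - y * x) := by
  rw [mul_central_mul c d x y hc hd, mul_central_mul d c y x hd hc, hd.comm c, ← mul_sub]

lemma isManin_central_mul_left (A C : Matrix (Fin n) (Fin n) R) (hA : A.IsManin)
    (hC : ∀ i j : Fin n, C i j ∈ Set.center R) : (C * A).IsManin := by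
  constructor
  · intro i k j
    simp only [Matrix.mul_apply]
    rw [Finset.sum_mul_sum, Finset.sum_mul_sum, Finset.sum_comm]
    refine Finset.sum_congr rfl fun x _ => Finset.sum_congr rfl fun y _ => ?_
    rw [central_mul_mul _ _ _ _ (hC i y) (hC k x),
      central_mul_mul _ _ _ _ (hC k x) (hC i y),
      (hC i y).comm (C k x), hA.1 y x j]
  · intro i k j l
    simp only [Matrix.mul_apply]
    rw [mul_sub_sum, mul_sub_sum]
    calc ∑ p, ∑ q, ((C i p * A p j) * (C k q * A q l) - (C k q * A q l) * (C i p * A p j))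
        = ∑ p, ∑ q, (C i p * C k q) * (A p j * A q l - A q l * A p j) :=
          Finset.sum_congr rfl fun p _ => Finset.sum_congr rfl fun q _ =>
            comm_term _ _ _ _ (hC i p) (hC k q)
      _ = ∑ p, ∑ q, (C k p * C i q) * (A p j * A q l - A q l * A p j) := by
          rw [Finset.sum_comm]
          refine Finset.sum_congr rfl fun x _ => Finset.sum_congr rfl fun y _ => ?_
          rw [(hC i y).comm (C k x), hA.2 y x j l]
      _ = ∑ p, ∑ q, ((C k p * A p j) * (C i q * A q l) - (C i q * A q l) * (C k p * A p j)) :=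
          Finset.sum_congr rfl fun p _ => Finset.sum_congr rfl fun q _ =>
            (comm_term _ _ _ _ (hC k p) (hC i q)).symm

lemma isManin_central_mul_right (A C : Matrix (Fin n) (Fin n) R) (hA : A.IsManin)
    (hC : ∀ i j : Fin n, C i j ∈ Set.center R) : (A * C).IsManin := by
  constructor
  · intro i k j
    rw [← sub_eq_zero]
    simp only [Matrix.mul_apply]
    rw [mul_sub_sum]
    have hterm : ∀ p q : Fin n,
        (A i p * C p j) * (A k q * C q j) - (A k q * C q j) * (A i p * C p j)
          = (C p j * C q j) * (A i p * A k q - A k q * A i p) := fun p q =>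
      comm_term' _ _ _ _ (hC p j) (hC q j)
    rw [Finset.sum_congr rfl fun p _ => Finset.sum_congr rfl fun q _ => hterm p q]
    have hkey : ∑ x : Fin n × Fin n,
        (C x.1 j * C x.2 j) * (A i x.1 * A k x.2 - A k x.2 * A i x.1) = 0 := by
      refine Finset.sum_ninvolution Prod.swap ?_ ?_ (fun _ => Finset.mem_univ _)
        (fun x => Prod.swap_swap x)
      · intro x
        have hcoef : C x.2 j * C x.1 j = C x.1 j * C x.2 j := (hC x.2 j).comm _
        have hbr : A i x.2 * A k x.1 - A k x.1 * A i x.2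
            = -(A i x.1 * A k x.2 - A k x.2 * A i x.1) := by
          rw [hA.2 i k x.2 x.1, neg_sub]
        show (C x.1 j * C x.2 j) * (A i x.1 * A k x.2 - A k x.2 * A i x.1)
            + (C x.2 j * C x.1 j) * (A i x.2 * A k x.1 - A k x.1 * A i x.2) = 0
        rw [hcoef, hbr, mul_neg]
        exact add_neg_cancel _
      · intro x hx
        intro hsw
        apply hx
        have h12 : x.2 = x.1 := congrArg Prod.fst hsw
        show (C x.1 j * C x.2 j) * (A i x.1 * A k x.2 - A k x.2 * A i x.1) = 0
        rw [h12, sub_eq_zero.2 (hA.1 i k x.1), mul_zero]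
    calc ∑ p, ∑ q, (C p j * C q j) * (A i p * A k q - A k q * A i p)
        = ∑ x : Fin n × Fin n,
            (C x.1 j * C x.2 j) * (A i x.1 * A k x.2 - A k x.2 * A i x.1) :=
          (Fintype.sum_prod_type (f := fun x : Fin n × Fin n =>
            (C x.1 j * C x.2 j) * (A i x.1 * A k x.2 - A k x.2 * A i x.1))).symm
      _ = 0 := hkey
  · intro i k j l
    simp only [Matrix.mul_apply]
    rw [mul_sub_sum, mul_sub_sum]
    refine Finset.sum_congr rfl fun p _ => Finset.sum_congr rfl fun q _ => ?_
    rw [comm_term' _ _ _ _ (hC p j) (hC q l), comm_term' _ _ _ _ (hC p j) (hC q l),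
      hA.2 i k p q]

end maninparts

end Aux

/-- if `A` is a Manin matrix and `C` has central entries, then `CA` and
`AC` are Manin matrices and `detCol (CA) = detCol (AC) = det C * detCol A`, where the
determinant of the central matrix `C` is its (order-independent) column determinant. -/
theorem isManin_central_mul {R : Type*} [Ring R] {n : ℕ}
    (A C : Matrix (Fin n) (Fin n) R) (hA : A.IsManin)
    (hC : ∀ i j : Fin n, C i j ∈ Set.center R) :
    (C * A).IsManin ∧ (A * C).IsManin ∧
    (C * A).detCol = C.detCol * A.detCol ∧
    (A * C).detCol = C.detCol * A.detCol :=
  ⟨isManin_central_mul_left A C hA hC, isManin_central_mul_right A C hA hC,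
    detCol_central_mul_left A C hA hC, detCol_central_mul_right A C hA hC⟩
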